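/- Let (E, μ) be a σ-finite measure space, let n ≥ 1, and let φ₀, …, φ_{n−1} : E → ℂ be measurable functions that are orthonormal in L²(μ), i.e. ∫_E φ_k(x)·conj(φ_ℓ(x)) dμ(x) = δ_{kℓ}. Define K_n(x,y) = Σ_{ℓ=0}^{n−1} φ_ℓ(x)·conj(φ_ℓ(y)). Then for every 0 ≤ k ≤ n and all fixed points x₁, …, x_k ∈ E, the function (x_{k+1}, …, x_n) ↦ det(K_n(x_i, x_j))_{1≤i,j≤n} is integrable on E^{n−k} and ∫_{E^{n−k}} det(K_n(x_i, x_j))_{1≤i,j≤n} dμ(x_{k+1})⋯dμ(x_n) = (n−k)! · det(K_n(x_i, x_j))_{1≤i,j≤k}. -/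

import Mathlib

open MeasureTheory
open Equiv Finset Matrix

section perm
variable {α β : Type*} [DecidableEq α] [DecidableEq β]

lemma exists_sumCongr_of_fix_right (ρ : Equiv.Perm (α ⊕ β))
    (h : ∀ b, ρ (Sum.inr b) = Sum.inr b) :
    ∃ π : Equiv.Perm α, Equiv.sumCongr π (Equiv.refl β) = ρ := by
  have h' : ∀ b, ρ.symm (Sum.inr b) = Sum.inr b := by
    intro b; rw [Equiv.symm_apply_eq, h]
  have hL : ∀ a, ∃ a', ρ (Sum.inl a) = Sum.inl a' := by
    intro a
    rcases hx : ρ (Sum.inl a) with a' | b'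
    · exact ⟨a', rfl⟩
    · exfalso
      have : ρ (Sum.inl a) = ρ (Sum.inr b') := by rw [hx, h]
      simpa using ρ.injective this
  have hL' : ∀ a, ∃ a', ρ.symm (Sum.inl a) = Sum.inl a' := by
    intro a
    rcases hx : ρ.symm (Sum.inl a) with a' | b'
    · exact ⟨a', rfl⟩
    · exfalso
      have : ρ.symm (Sum.inl a) = ρ.symm (Sum.inr b') := by rw [hx, h']
      simpa using ρ.symm.injective this
  choose f hf using hL
  choose g hg using hL'
  refine ⟨⟨f, g, ?_, ?_⟩, ?_⟩
  · intro a
    have : ρ.symm (Sum.inl (f a)) = Sum.inl a := by rw [← hf, Equiv.symm_apply_apply]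
    have := (hg (f a)).symm.trans this
    simpa using this
  · intro a
    have : ρ (Sum.inl (g a)) = Sum.inl a := by rw [← hg, Equiv.apply_symm_apply]
    have := (hf (g a)).symm.trans this
    simpa using this
  · ext x
    rcases x with a | b
    · simp [hf a]
    · simp [h b]

lemma exists_sumCongr_of_fix_left (ρ : Equiv.Perm (α ⊕ β))
    (h : ∀ a, ρ (Sum.inl a) = Sum.inl a) :
    ∃ π : Equiv.Perm β, Equiv.sumCongr (Equiv.refl α) π = ρ := by
  have h' : ∀ a, ρ.symm (Sum.inl a) = Sum.inl a := by
    intro a; rw [Equiv.symm_apply_eq, h]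
  have hR : ∀ b, ∃ b', ρ (Sum.inr b) = Sum.inr b' := by
    intro b
    rcases hx : ρ (Sum.inr b) with a' | b'
    · exfalso
      have : ρ (Sum.inr b) = ρ (Sum.inl a') := by rw [hx, h]
      simpa using ρ.injective this
    · exact ⟨b', rfl⟩
  have hR' : ∀ b, ∃ b', ρ.symm (Sum.inr b) = Sum.inr b' := by
    intro b
    rcases hx : ρ.symm (Sum.inr b) with a' | b'
    · exfalso
      have : ρ.symm (Sum.inr b) = ρ.symm (Sum.inl a') := by rw [hx, h']
      simpa using ρ.symm.injective this
    · exact ⟨b', rfl⟩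
  choose f hf using hR
  choose g hg using hR'
  refine ⟨⟨f, g, ?_, ?_⟩, ?_⟩
  · intro b
    have : ρ.symm (Sum.inr (f b)) = Sum.inr b := by rw [← hf, Equiv.symm_apply_apply]
    have := (hg (f b)).symm.trans this
    simpa using this
  · intro b
    have : ρ (Sum.inr (g b)) = Sum.inr b := by rw [← hg, Equiv.apply_symm_apply]
    have := (hf (g b)).symm.trans this
    simpa using this
  · ext x
    rcases x with a | b
    · simp [h a]
    · simp [hf b]

variable [Fintype α] [Fintype β]

lemma sum_perm_fix_right {M : Type*} [AddCommMonoid M] (G : Equiv.Perm (α ⊕ β) → M) :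
    (∑ ρ : Equiv.Perm (α ⊕ β),
      if (∀ b, ρ (Sum.inr b) = Sum.inr b) then G ρ else 0)
      = ∑ π : Equiv.Perm α, G (Equiv.sumCongr π (Equiv.refl β)) := by
  classical
  rw [← Finset.sum_filter]
  refine (Finset.sum_bij (fun π _ => Equiv.sumCongr π (Equiv.refl β)) ?_ ?_ ?_ ?_).symm
  · intro π _
    simp [Finset.mem_filter]
  · intro π₁ _ π₂ _ heq
    ext a
    have := congrArg (fun (ρ : Equiv.Perm (α ⊕ β)) => ρ (Sum.inl a)) heq
    simpa using this
  · intro ρ hρ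
    rw [Finset.mem_filter] at hρ
    obtain ⟨π, hπ⟩ := exists_sumCongr_of_fix_right ρ hρ.2
    exact ⟨π, Finset.mem_univ _, hπ⟩
  · intro π _; rfl

lemma card_perm_fix_left :
    (Finset.univ.filter
      (fun ρ : Equiv.Perm (α ⊕ β) => ∀ a, ρ (Sum.inl a) = Sum.inl a)).card
      = (Fintype.card β).factorial := by
  classical
  rw [← Fintype.card_perm (α := β)]
  rw [Fintype.card, eq_comm]
  refine Finset.card_bij (fun π _ => Equiv.sumCongr (Equiv.refl α) π) ?_ ?_ ?_
  · intro π _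
    simp [Finset.mem_filter]
  · intro π₁ _ π₂ _ heq
    ext b
    have := congrArg (fun (ρ : Equiv.Perm (α ⊕ β)) => ρ (Sum.inr b)) heq
    simpa using this
  · intro ρ hρ
    rw [Finset.mem_filter] at hρ
    obtain ⟨π, hπ⟩ := exists_sumCongr_of_fix_left ρ hρ.2
    exact ⟨π, Finset.mem_univ _, hπ⟩

end perm

section det
variable {E ι γ : Type*} [Fintype ι] [DecidableEq ι] [Fintype γ] [DecidableEq γ]

lemma det_kernel_expand (q : ι ≃ γ) (φ : γ → E → ℂ) (w : ι → E) :
    Matrix.det (Matrix.of fun i j : ι =>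
        ∑ ℓ : γ, φ ℓ (w i) * (starRingEnd ℂ) (φ ℓ (w j)))
      = ∑ σ : Equiv.Perm ι, ∑ τ : Equiv.Perm ι,
          (((Equiv.Perm.sign σ : ℤ) : ℂ) * ((Equiv.Perm.sign τ : ℤ) : ℂ))
            * ∏ i, (φ (q (σ i)) (w i) * (starRingEnd ℂ) (φ (q (τ i)) (w i))) := by
  classical
  set A : Matrix ι ι ℂ := Matrix.of fun ℓ i => φ (q ℓ) (w i) with hA
  have hM : (Matrix.of fun i j : ι =>
      ∑ ℓ : γ, φ ℓ (w i) * (starRingEnd ℂ) (φ ℓ (w j)))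
      = Aᵀ * A.map (starRingEnd ℂ) := by
    ext i j
    simp only [Matrix.mul_apply, Matrix.transpose_apply, Matrix.map_apply, Matrix.of_apply, hA]
    exact (Equiv.sum_comp q (fun ℓ => φ ℓ (w i) * (starRingEnd ℂ) (φ ℓ (w j)))).symm
  rw [hM, Matrix.det_mul, Matrix.det_transpose]
  have hmapdet : (A.map ⇑(starRingEnd ℂ)).det = (starRingEnd ℂ) A.det := by
    rw [← RingHom.mapMatrix_apply, ← RingHom.map_det]
  rw [hmapdet, Matrix.det_apply', map_sum, Finset.sum_mul_sum]
  refine Finset.sum_congr rfl fun σ _ => Finset.sum_congr rfl fun τ _ => ?_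
  rw [_root_.map_mul, map_prod, Finset.prod_mul_distrib]
  have hsign : (starRingEnd ℂ) (((Equiv.Perm.sign τ : ℤ) : ℂ)) = ((Equiv.Perm.sign τ : ℤ) : ℂ) :=
    map_intCast _ _
  simp only [hA, Matrix.of_apply, hsign]
  ring

lemma exists_perm_extend {α β : Type*} [Fintype α] [Fintype β] [DecidableEq α]
    [DecidableEq β] (q : α ⊕ β ≃ γ) (g : α → γ) (hg : Function.Injective g) :
    ∃ τ : Equiv.Perm (α ⊕ β), ∀ a, q (τ (Sum.inl a)) = g a := by
  classical
  have hcard : Fintype.card β = Fintype.card {x : γ // x ∉ Set.range g} := by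
    have h1 : Fintype.card (Set.range g) = Fintype.card α :=
      Set.card_range_of_injective hg
    have h2 : Fintype.card {x : γ // x ∉ Set.range g}
        = Fintype.card γ - Fintype.card (Set.range g) := by
      rw [← Fintype.card_subtype_compl]
    have h3 : Fintype.card γ = Fintype.card α + Fintype.card β := by
      rw [← Fintype.card_congr q, Fintype.card_sum]
    omega
  let c : β ≃ {x : γ // x ∉ Set.range g} := Fintype.equivOfCardEq hcard
  let f : α ⊕ β → γ := Sum.elim g (fun b => (c b).1)
  have hf : Function.Bijective f := by
    constructor
    · rintro (a | b) (a' | b') huv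
      · exact congrArg Sum.inl (hg huv)
      · exact absurd ⟨a, huv⟩ (c b').2
      · exact absurd ⟨a', huv.symm⟩ (c b).2
      · exact congrArg Sum.inr (c.injective (Subtype.ext huv))
    · intro x
      by_cases hx : x ∈ Set.range g
      · obtain ⟨a, ha⟩ := hx; exact ⟨Sum.inl a, ha⟩
      · exact ⟨Sum.inr (c.symm ⟨x, hx⟩), by simp [f]⟩
  refine ⟨(Equiv.ofBijective f hf).trans q.symm, fun a => ?_⟩
  simp [f, Equiv.ofBijective]

end det

section gram
variable {E α γ : Type*} [Fintype α] [DecidableEq α] [Fintype γ] [DecidableEq γ]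

lemma det_gram (φ : γ → E → ℂ) (x : α → E) :
    ∑ g : α → γ, (Matrix.det (Matrix.of fun b a : α => φ (g b) (x a))
        * ∏ a, (starRingEnd ℂ) (φ (g a) (x a)))
      = Matrix.det (Matrix.of fun i j : α =>
          ∑ ℓ : γ, φ ℓ (x i) * (starRingEnd ℂ) (φ ℓ (x j))) := by
  classical
  rw [Matrix.det_apply']
  calc
    ∑ g : α → γ, (Matrix.det (Matrix.of fun b a : α => φ (g b) (x a))
        * ∏ a, (starRingEnd ℂ) (φ (g a) (x a)))
      = ∑ g : α → γ, ∑ π : Equiv.Perm α, ((Equiv.Perm.sign π : ℤ) : ℂ)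
          * (∏ a, φ (g (π a)) (x a)) * ∏ a, (starRingEnd ℂ) (φ (g a) (x a)) := by
        refine Finset.sum_congr rfl fun g _ => ?_
        rw [Matrix.det_apply', Finset.sum_mul]
        refine Finset.sum_congr rfl fun π _ => ?_
        simp [mul_assoc]
    _ = ∑ π : Equiv.Perm α, ∑ g : α → γ, ((Equiv.Perm.sign π : ℤ) : ℂ)
          * (∏ a, φ (g (π a)) (x a)) * ∏ a, (starRingEnd ℂ) (φ (g a) (x a)) :=
        Finset.sum_comm
    _ = ∑ π : Equiv.Perm α, ∑ g : α → γ, ((Equiv.Perm.sign π : ℤ) : ℂ)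
          * (∏ a, φ (g a) (x (π⁻¹ a))) * ∏ a, (starRingEnd ℂ) (φ (g a) (x a)) := by
        refine Finset.sum_congr rfl fun π _ => Finset.sum_congr rfl fun g _ => ?_
        congr 1
        congr 1
        calc ∏ a, φ (g (π a)) (x a)
            = ∏ a, φ (g (π (π⁻¹ a))) (x (π⁻¹ a)) :=
              (Equiv.prod_comp π⁻¹ (fun a => φ (g (π a)) (x a))).symm
          _ = ∏ a, φ (g a) (x (π⁻¹ a)) := by
              refine Finset.prod_congr rfl fun a _ => ?_
              rw [Equiv.Perm.coe_inv, Equiv.apply_symm_apply]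
    _ = ∑ π : Equiv.Perm α, ∑ g : α → γ, ((Equiv.Perm.sign π : ℤ) : ℂ)
          * (∏ a, φ (g a) (x (π a))) * ∏ a, (starRingEnd ℂ) (φ (g a) (x a)) := by
        refine (Fintype.sum_equiv (Equiv.inv (Equiv.Perm α)) _ _ fun π => ?_)
        simp only [Equiv.inv_apply]
        rw [Equiv.Perm.sign_inv]
    _ = ∑ π : Equiv.Perm α, ((Equiv.Perm.sign π : ℤ) : ℂ)
          * ∏ a, ∑ ℓ : γ, φ ℓ (x (π a)) * (starRingEnd ℂ) (φ ℓ (x a)) := by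
        refine Finset.sum_congr rfl fun π _ => ?_
        rw [Fintype.prod_sum, Finset.mul_sum]
        refine Finset.sum_congr rfl fun g _ => ?_
        rw [Finset.prod_mul_distrib, mul_assoc]
    _ = ∑ π : Equiv.Perm α, ((Equiv.Perm.sign π : ℤ) : ℂ)
          * ∏ a, (Matrix.of fun i j : α =>
              ∑ ℓ : γ, φ ℓ (x i) * (starRingEnd ℂ) (φ ℓ (x j))) (π a) a := rfl
end gram

section comb
variable {E α β γ : Type*} [Fintype α] [DecidableEq α] [Fintype β] [DecidableEq β]
  [Fintype γ] [DecidableEq γ]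

lemma comb_identity (q : α ⊕ β ≃ γ) (φ : γ → E → ℂ) (x : α → E) :
    ∑ σ : Equiv.Perm (α ⊕ β), ∑ τ : Equiv.Perm (α ⊕ β),
      (if ∀ b, σ (Sum.inr b) = τ (Sum.inr b) then
        (((Equiv.Perm.sign σ : ℤ) : ℂ) * ((Equiv.Perm.sign τ : ℤ) : ℂ))
          * ∏ a, (φ (q (σ (Sum.inl a))) (x a)
              * (starRingEnd ℂ) (φ (q (τ (Sum.inl a))) (x a))) else 0)
    = (Fintype.card β).factorial * Matrix.det (Matrix.of fun i j : α =>
        ∑ ℓ : γ, φ ℓ (x i) * (starRingEnd ℂ) (φ ℓ (x j))) := by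
  classical
  set T : (α → γ) → ℂ := fun g =>
    Matrix.det (Matrix.of fun b a : α => φ (g b) (x a))
      * ∏ a, (starRingEnd ℂ) (φ (g a) (x a)) with hT
  have hTdet : ∀ g : α → γ, T g = (∑ π : Equiv.Perm α, ((Equiv.Perm.sign π : ℤ) : ℂ)
      * ∏ a, φ (g (π a)) (x a)) * ∏ a, (starRingEnd ℂ) (φ (g a) (x a)) := by
    intro g; rw [hT]; simp only [Matrix.det_apply', Matrix.of_apply]
  -- Step 1: reduce LHS to ∑ τ, T (fun a => q (τ (Sum.inl a)))
  have step1 : (∑ σ : Equiv.Perm (α ⊕ β), ∑ τ : Equiv.Perm (α ⊕ β),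
      (if ∀ b, σ (Sum.inr b) = τ (Sum.inr b) then
        (((Equiv.Perm.sign σ : ℤ) : ℂ) * ((Equiv.Perm.sign τ : ℤ) : ℂ))
          * ∏ a, (φ (q (σ (Sum.inl a))) (x a)
              * (starRingEnd ℂ) (φ (q (τ (Sum.inl a))) (x a))) else 0))
      = ∑ τ : Equiv.Perm (α ⊕ β), T (fun a => q (τ (Sum.inl a))) := by
    rw [Finset.sum_comm]
    refine Finset.sum_congr rfl fun τ _ => ?_
    calc
      ∑ σ : Equiv.Perm (α ⊕ β),
        (if ∀ b, σ (Sum.inr b) = τ (Sum.inr b) then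
          (((Equiv.Perm.sign σ : ℤ) : ℂ) * ((Equiv.Perm.sign τ : ℤ) : ℂ))
            * ∏ a, (φ (q (σ (Sum.inl a))) (x a)
                * (starRingEnd ℂ) (φ (q (τ (Sum.inl a))) (x a))) else 0)
        = ∑ ρ : Equiv.Perm (α ⊕ β),
            (if ∀ b, ρ (Sum.inr b) = Sum.inr b then
              (((Equiv.Perm.sign (τ * ρ) : ℤ) : ℂ) * ((Equiv.Perm.sign τ : ℤ) : ℂ))
                * ∏ a, (φ (q ((τ * ρ) (Sum.inl a))) (x a)
                    * (starRingEnd ℂ) (φ (q (τ (Sum.inl a))) (x a))) else 0) := by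
          refine (Fintype.sum_equiv (Equiv.mulLeft τ) _ _ fun ρ => ?_).symm
          simp only [Equiv.coe_mulLeft]
          congr 1
          refine propext ⟨fun h b => ?_, fun h b => ?_⟩
          · rw [Equiv.Perm.mul_apply, h b]
          · have := h b; rw [Equiv.Perm.mul_apply] at this; exact τ.injective this
      _ = ∑ π : Equiv.Perm α,
            (((Equiv.Perm.sign (τ * Equiv.sumCongr π (Equiv.refl β)) : ℤ) : ℂ)
                * ((Equiv.Perm.sign τ : ℤ) : ℂ))
              * ∏ a, (φ (q ((τ * Equiv.sumCongr π (Equiv.refl β)) (Sum.inl a))) (x a)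
                  * (starRingEnd ℂ) (φ (q (τ (Sum.inl a))) (x a))) :=
          sum_perm_fix_right _
      _ = T (fun a => q (τ (Sum.inl a))) := by
          rw [hTdet, Finset.sum_mul]
          refine Finset.sum_congr rfl fun π _ => ?_
          have hsign : ((Equiv.Perm.sign (τ * Equiv.sumCongr π (Equiv.refl β)) : ℤ) : ℂ)
              * ((Equiv.Perm.sign τ : ℤ) : ℂ) = ((Equiv.Perm.sign π : ℤ) : ℂ) := by
            rw [_root_.map_mul, Equiv.Perm.sign_sumCongr, Equiv.Perm.sign_refl, mul_one]
            push_cast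
            rcases Int.units_eq_one_or (Equiv.Perm.sign τ) with h | h <;> rw [h] <;>
              simp <;> ring
          have happ : ∀ a, (τ * Equiv.sumCongr π (Equiv.refl β)) (Sum.inl a)
              = τ (Sum.inl (π a)) := by
            intro a; rw [Equiv.Perm.mul_apply]; rfl
          simp only [happ, hsign]
          rw [Finset.prod_mul_distrib]
          ring
    done
  rw [step1]
  -- Step 2: counting
  have hcount : ∀ τ₁ : Equiv.Perm (α ⊕ β),
      (Finset.univ.filter (fun τ : Equiv.Perm (α ⊕ β) =>
        (fun a => q (τ (Sum.inl a))) = (fun a => q (τ₁ (Sum.inl a))))).card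
        = (Fintype.card β).factorial := by
    intro τ₁
    rw [← card_perm_fix_left (α := α) (β := β)]
    refine Finset.card_bij (fun τ _ => τ₁⁻¹ * τ) ?_ ?_ ?_
    · intro τ hτ
      rw [Finset.mem_filter] at hτ ⊢
      refine ⟨Finset.mem_univ _, fun a => ?_⟩
      have := congrFun hτ.2 a
      have h2 : τ (Sum.inl a) = τ₁ (Sum.inl a) := q.injective this
      rw [Equiv.Perm.mul_apply, h2, Equiv.Perm.coe_inv, Equiv.symm_apply_apply]
    · intro τ _ τ' _ h
      exact mul_left_cancel h
    · intro ρ hρ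
      rw [Finset.mem_filter] at hρ
      refine ⟨τ₁ * ρ, ?_, by group⟩
      rw [Finset.mem_filter]
      refine ⟨Finset.mem_univ _, funext fun a => ?_⟩
      rw [Equiv.Perm.mul_apply, hρ.2 a]
  have step2 : (∑ τ : Equiv.Perm (α ⊕ β), T (fun a => q (τ (Sum.inl a))))
      = ∑ g ∈ Finset.univ.image (fun (τ : Equiv.Perm (α ⊕ β)) a => q (τ (Sum.inl a))),
          (Fintype.card β).factorial • T g := by
    rw [Finset.sum_comp]
    refine Finset.sum_congr rfl fun g hg => ?_
    rw [Finset.mem_image] at hg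
    obtain ⟨τ₁, _, hτ₁⟩ := hg
    congr 1
    rw [← hcount τ₁]
    congr 1
    ext τ
    simp only [Finset.mem_filter, Finset.mem_univ, true_and, ← hτ₁]
  rw [step2]
  -- Step 3: from image to all functions
  have hTzero : ∀ g : α → γ, ¬ Function.Injective g → T g = 0 := by
    intro g hg
    rw [Function.not_injective_iff] at hg
    obtain ⟨b, b', hbb', hne⟩ := hg
    simp only [hT]
    have : Matrix.det (Matrix.of fun b a : α => φ (g b) (x a)) = 0 := by
      refine Matrix.det_zero_of_row_eq hne ?_
      ext a
      simp [hbb']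
    rw [this, zero_mul]
  have himage : Finset.univ.image (fun (τ : Equiv.Perm (α ⊕ β)) a => q (τ (Sum.inl a)))
      = Finset.univ.filter (fun g : α → γ => Function.Injective g) := by
    ext g
    simp only [Finset.mem_image, Finset.mem_filter, Finset.mem_univ, true_and]
    constructor
    · rintro ⟨τ, _, rfl⟩
      intro a a' h
      have := q.injective h
      have := τ.injective this
      simpa using this
    · intro hg
      obtain ⟨τ, hτ⟩ := exists_perm_extend q g hg
      exact ⟨τ, funext hτ⟩
  rw [himage]
  rw [← det_gram φ x]
  rw [Finset.mul_sum]
  rw [Finset.sum_filter]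
  refine Finset.sum_congr rfl fun g _ => ?_
  by_cases hg : Function.Injective g
  · simp [hg, nsmul_eq_mul, hT]
  · have h0 := hTzero g hg
    simp only [hT] at h0
    simp [hg, h0]

end comb

section main
variable {E : Type*} [MeasurableSpace E] {α β γ : Type*} [Fintype α] [DecidableEq α]
  [Fintype β] [DecidableEq β] [Fintype γ] [DecidableEq γ]

theorem integrate_aux (μ : Measure E) [SigmaFinite μ]
    (q : α ⊕ β ≃ γ) (φ : γ → E → ℂ)
    (horth_int : ∀ k ℓ, Integrable (fun t => φ k t * (starRingEnd ℂ) (φ ℓ t)) μ)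
    (horth : ∀ k ℓ, (∫ t, φ k t * (starRingEnd ℂ) (φ ℓ t) ∂μ) = if k = ℓ then 1 else 0)
    (x : α → E) :
    Integrable (fun y : β → E => Matrix.det (Matrix.of fun i j : α ⊕ β =>
        ∑ ℓ : γ, φ ℓ (Sum.elim x y i) * (starRingEnd ℂ) (φ ℓ (Sum.elim x y j))))
      (Measure.pi fun _ : β => μ) ∧
    (∫ y : β → E, Matrix.det (Matrix.of fun i j : α ⊕ β =>
        ∑ ℓ : γ, φ ℓ (Sum.elim x y i) * (starRingEnd ℂ) (φ ℓ (Sum.elim x y j)))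
        ∂(Measure.pi fun _ : β => μ))
      = (Fintype.card β).factorial * Matrix.det (Matrix.of fun i j : α =>
          ∑ ℓ : γ, φ ℓ (x i) * (starRingEnd ℂ) (φ ℓ (x j))) := by
  classical
  letI : MeasureSpace E := ⟨μ⟩
  have hvol : (Measure.pi fun _ : β => μ) = (volume : Measure (β → E)) :=
    (MeasureTheory.volume_pi).symm
  have hdet : ∀ y : β → E,
      Matrix.det (Matrix.of fun i j : α ⊕ β =>
        ∑ ℓ : γ, φ ℓ (Sum.elim x y i) * (starRingEnd ℂ) (φ ℓ (Sum.elim x y j)))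
      = ∑ σ : Equiv.Perm (α ⊕ β), ∑ τ : Equiv.Perm (α ⊕ β),
          ((((Equiv.Perm.sign σ : ℤ) : ℂ) * ((Equiv.Perm.sign τ : ℤ) : ℂ))
            * ∏ a, (φ (q (σ (Sum.inl a))) (x a)
                * (starRingEnd ℂ) (φ (q (τ (Sum.inl a))) (x a))))
          * ∏ b, (φ (q (σ (Sum.inr b))) (y b)
              * (starRingEnd ℂ) (φ (q (τ (Sum.inr b))) (y b))) := by
    intro y
    rw [det_kernel_expand q φ (Sum.elim x y)]
    refine Finset.sum_congr rfl fun σ _ => Finset.sum_congr rfl fun τ _ => ?_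
    rw [Fintype.prod_sum_type]
    simp only [Sum.elim_inl, Sum.elim_inr]
    ring
  have hint : ∀ σ τ : Equiv.Perm (α ⊕ β),
      Integrable (fun y : β → E =>
        ((((Equiv.Perm.sign σ : ℤ) : ℂ) * ((Equiv.Perm.sign τ : ℤ) : ℂ))
            * ∏ a, (φ (q (σ (Sum.inl a))) (x a)
                * (starRingEnd ℂ) (φ (q (τ (Sum.inl a))) (x a))))
          * ∏ b, (φ (q (σ (Sum.inr b))) (y b)
              * (starRingEnd ℂ) (φ (q (τ (Sum.inr b))) (y b))))
        (Measure.pi fun _ : β => μ) := by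
    intro σ τ
    rw [hvol]
    exact (MeasureTheory.Integrable.fintype_prod
      (f := fun b t => φ (q (σ (Sum.inr b))) t * (starRingEnd ℂ) (φ (q (τ (Sum.inr b))) t))
      (fun b => horth_int _ _)).const_mul _
  have hintsum : ∀ σ : Equiv.Perm (α ⊕ β),
      Integrable (fun y : β → E => ∑ τ : Equiv.Perm (α ⊕ β),
        ((((Equiv.Perm.sign σ : ℤ) : ℂ) * ((Equiv.Perm.sign τ : ℤ) : ℂ))
            * ∏ a, (φ (q (σ (Sum.inl a))) (x a)
                * (starRingEnd ℂ) (φ (q (τ (Sum.inl a))) (x a))))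
          * ∏ b, (φ (q (σ (Sum.inr b))) (y b)
              * (starRingEnd ℂ) (φ (q (τ (Sum.inr b))) (y b))))
        (Measure.pi fun _ : β => μ) :=
    fun σ => integrable_finset_sum _ fun τ _ => hint σ τ
  have hintdet : Integrable (fun y : β → E => Matrix.det (Matrix.of fun i j : α ⊕ β =>
        ∑ ℓ : γ, φ ℓ (Sum.elim x y i) * (starRingEnd ℂ) (φ ℓ (Sum.elim x y j))))
      (Measure.pi fun _ : β => μ) := by
    refine Integrable.congr (integrable_finset_sum (Finset.univ (α := Equiv.Perm (α ⊕ β))) fun σ _ => hintsum σ) ?_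
    exact ae_of_all _ fun y => (hdet y).symm
  refine ⟨hintdet, ?_⟩
  rw [integral_congr_ae (ae_of_all _ hdet)]
  rw [integral_finset_sum (Finset.univ (α := Equiv.Perm (α ⊕ β))) fun σ _ => hintsum σ]
  have hterm : ∀ σ τ : Equiv.Perm (α ⊕ β),
      (∫ y : β → E, ((((Equiv.Perm.sign σ : ℤ) : ℂ) * ((Equiv.Perm.sign τ : ℤ) : ℂ))
            * ∏ a, (φ (q (σ (Sum.inl a))) (x a)
                * (starRingEnd ℂ) (φ (q (τ (Sum.inl a))) (x a))))
          * ∏ b, (φ (q (σ (Sum.inr b))) (y b)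
              * (starRingEnd ℂ) (φ (q (τ (Sum.inr b))) (y b)))
          ∂(Measure.pi fun _ : β => μ))
      = if ∀ b, σ (Sum.inr b) = τ (Sum.inr b) then
          ((((Equiv.Perm.sign σ : ℤ) : ℂ) * ((Equiv.Perm.sign τ : ℤ) : ℂ))
            * ∏ a, (φ (q (σ (Sum.inl a))) (x a)
                * (starRingEnd ℂ) (φ (q (τ (Sum.inl a))) (x a)))) else 0 := by
    intro σ τ
    rw [hvol, integral_const_mul, MeasureTheory.volume_pi,
      MeasureTheory.integral_fintype_prod_eq_prod
        (f := fun b t => φ (q (σ (Sum.inr b))) t * (starRingEnd ℂ) (φ (q (τ (Sum.inr b))) t))]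
    have : ∀ b : β, (∫ t : E, φ (q (σ (Sum.inr b))) t
        * (starRingEnd ℂ) (φ (q (τ (Sum.inr b))) t))
        = if σ (Sum.inr b) = τ (Sum.inr b) then 1 else 0 := by
      intro b
      have h := horth (q (σ (Sum.inr b))) (q (τ (Sum.inr b)))
      have : (∫ t : E, φ (q (σ (Sum.inr b))) t
          * (starRingEnd ℂ) (φ (q (τ (Sum.inr b))) t))
          = (∫ t : E, φ (q (σ (Sum.inr b))) t
            * (starRingEnd ℂ) (φ (q (τ (Sum.inr b))) t) ∂μ) := rfl
      rw [this, h]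
      simp [q.injective.eq_iff]
    simp only [this]
    rw [Fintype.prod_boole]
    split <;> simp
  simp only [integral_finset_sum (Finset.univ (α := Equiv.Perm (α ⊕ β))) fun τ _ => hint _ τ, hterm]
  exact comb_identity q φ x

end main

/-- **Correlation functions of projection kernels (formula (2.3)).**
For an orthonormal family `φ₀, …, φ_{n-1}` in `L²(μ)` and the projection kernel
`K_n(x,y) = Σ_{ℓ<n} φ_ℓ(x) conj(φ_ℓ(y))`, integrating out the last `n - k` of the `n`
variables of `det (K_n(x_i, x_j))_{1≤i,j≤n}` yields `(n-k)!` times the `k × k`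
determinant `det (K_n(x_i, x_j))_{1≤i,j≤k}`. -/
theorem integrate_out_projection_kernel_det
    {E : Type*} [MeasurableSpace E] (μ : Measure E) [SigmaFinite μ]
    (n : ℕ) (hn : 1 ≤ n) (φ : Fin n → E → ℂ)
    (hφmeas : ∀ ℓ, Measurable (φ ℓ))
    (hφL2 : ∀ ℓ, MemLp (φ ℓ) 2 μ)
    (horth_int : ∀ k ℓ, Integrable (fun x => φ k x * (starRingEnd ℂ) (φ ℓ x)) μ)
    (horth : ∀ k ℓ, (∫ x, φ k x * (starRingEnd ℂ) (φ ℓ x) ∂μ) = if k = ℓ then 1 else 0)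
    (k : ℕ) (hk : k ≤ n) (x : Fin k → E) :
    Integrable (fun y : Fin (n - k) → E => Matrix.det (Matrix.of (fun i j : Fin n =>
        ∑ ℓ, φ ℓ ((Fin.append x y : Fin (k + (n - k)) → E)
              (Fin.cast (Nat.add_sub_cancel' hk).symm i))
          * (starRingEnd ℂ) (φ ℓ ((Fin.append x y : Fin (k + (n - k)) → E)
              (Fin.cast (Nat.add_sub_cancel' hk).symm j))))))
      (Measure.pi fun _ : Fin (n - k) => μ) ∧
    (∫ y : Fin (n - k) → E, Matrix.det (Matrix.of (fun i j : Fin n =>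
        ∑ ℓ, φ ℓ ((Fin.append x y : Fin (k + (n - k)) → E)
              (Fin.cast (Nat.add_sub_cancel' hk).symm i))
          * (starRingEnd ℂ) (φ ℓ ((Fin.append x y : Fin (k + (n - k)) → E)
              (Fin.cast (Nat.add_sub_cancel' hk).symm j)))))
        ∂(Measure.pi fun _ : Fin (n - k) => μ))
      = (Nat.factorial (n - k)) * Matrix.det (Matrix.of (fun i j : Fin k =>
          ∑ ℓ, φ ℓ (x i) * (starRingEnd ℂ) (φ ℓ (x j)))) := by
  classical
  have hkm : k + (n - k) = n := Nat.add_sub_cancel' hk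
  set q : (Fin k ⊕ Fin (n - k)) ≃ Fin n := finSumFinEquiv.trans (finCongr hkm) with hq
  have happ : ∀ (y : Fin (n - k) → E) (i' : Fin k ⊕ Fin (n - k)),
      (Fin.append x y : Fin (k + (n - k)) → E)
        (Fin.cast (Nat.add_sub_cancel' hk).symm (q i')) = Sum.elim x y i' := by
    intro y i'
    have hcast : Fin.cast (Nat.add_sub_cancel' hk).symm (q i') = finSumFinEquiv i' := by
      apply Fin.ext
      simp [hq]
    rw [hcast]
    cases i' with
    | inl a => simp [Fin.append_left]
    | inr b => simp [Fin.append_right]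
  have hdeteq : ∀ y : Fin (n - k) → E,
      Matrix.det (Matrix.of (fun i j : Fin n =>
        ∑ ℓ, φ ℓ ((Fin.append x y : Fin (k + (n - k)) → E)
              (Fin.cast (Nat.add_sub_cancel' hk).symm i))
          * (starRingEnd ℂ) (φ ℓ ((Fin.append x y : Fin (k + (n - k)) → E)
              (Fin.cast (Nat.add_sub_cancel' hk).symm j)))))
      = Matrix.det (Matrix.of fun i j : Fin k ⊕ Fin (n - k) =>
          ∑ ℓ, φ ℓ (Sum.elim x y i) * (starRingEnd ℂ) (φ ℓ (Sum.elim x y j))) := by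
    intro y
    rw [← Matrix.det_submatrix_equiv_self q]
    congr 1
    ext i' j'
    simp only [Matrix.submatrix_apply, Matrix.of_apply, happ y]
  have key := integrate_aux μ q φ horth_int horth x
  constructor
  · exact key.1.congr (ae_of_all _ fun y => (hdeteq y).symm)
  · rw [integral_congr_ae (ae_of_all _ hdeteq), key.2, Fintype.card_fin]
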